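/- Let d ≥ 1, let f, g : (Fin d → ℝ) → ℝ be differentiable at a point x : Fin d → ℝ, and let n : Fin d → ℝ. Suppose f(y) = g(y) for every y with ∑ᵢ (yᵢ − xᵢ)·nᵢ = 0. Define the jump Jⱼ = ∂ⱼf(x) − ∂ⱼg(x), where ∂ⱼ denotes the partial derivative in the j-th coordinate direction. Then the rank-one tensor Jⱼ·nₖ is symmetric: Jⱼ·nₖ = Jₖ·nⱼ for all j, k ∈ Fin d. (This is the jump-symmetry property underlying the discrete Schwarz theorem: the jump of the gradient of a function continuous across a hyperplane is a symmetric tensor when multiplied by the normal.) -/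

import Mathlib

/-- Jump-symmetry property: the jump of the gradient of a function continuous across a
hyperplane with normal `n` gives a symmetric rank-one tensor `J j * n k`. -/
theorem gradient_jump_symm
    (d : ℕ) (hd : 1 ≤ d)
    (f g : (Fin d → ℝ) → ℝ) (x n : Fin d → ℝ)
    (hf : DifferentiableAt ℝ f x) (hg : DifferentiableAt ℝ g x)
    (h : ∀ y : Fin d → ℝ, ∑ i, (y i - x i) * n i = 0 → f y = g y)
    (J : Fin d → ℝ)
    (hJ : ∀ j, J j = fderiv ℝ f x (Pi.single j 1) - fderiv ℝ g x (Pi.single j 1)) :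
    ∀ j k, J j * n k = J k * n j := by
  -- key: fderiv f x v = fderiv g x v for any v orthogonal to n
  have key : ∀ v : Fin d → ℝ, (∑ i, v i * n i) = 0 →
      fderiv ℝ f x v = fderiv ℝ g x v := by
    intro v hv
    have hcurve : HasDerivAt (fun t : ℝ => x + t • v) v 0 := by
      simpa using (((hasDerivAt_id (0:ℝ)).smul_const v).const_add x)
    have hf' : HasFDerivAt f (fderiv ℝ f x) (x + (0:ℝ) • v) := by
      simpa using hf.hasFDerivAt
    have hg' : HasFDerivAt g (fderiv ℝ g x) (x + (0:ℝ) • v) := by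
      simpa using hg.hasFDerivAt
    have hF : HasDerivAt (fun t : ℝ => f (x + t • v)) (fderiv ℝ f x v) 0 := by
      exact hf'.comp_hasDerivAt 0 hcurve
    have hG : HasDerivAt (fun t : ℝ => g (x + t • v)) (fderiv ℝ g x v) 0 := by
      exact hg'.comp_hasDerivAt 0 hcurve
    have heq : (fun t : ℝ => f (x + t • v)) = fun t : ℝ => g (x + t • v) := by
      funext t
      apply h
      have : ∀ i, (x + t • v) i - x i = t * v i := by intro i; simp [mul_comm]
      simp only [this, mul_assoc, ← Finset.mul_sum, hv, mul_zero]
    rw [heq] at hF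
    exact hF.unique hG
  intro j k
  set L := (fderiv ℝ f x) - (fderiv ℝ g x) with hL
  have hLv : ∀ v : Fin d → ℝ, (∑ i, v i * n i) = 0 → L v = 0 := by
    intro v hv
    simp [hL, ContinuousLinearMap.sub_apply, key v hv]
  have hsingle : ∀ a : Fin d, (∑ i, (Pi.single a 1 : Fin d → ℝ) i * n i) = n a := by
    intro a; simp [Pi.single_apply, Finset.sum_ite_eq']
  have hv0 : (∑ i, (n k • (Pi.single j 1 : Fin d → ℝ) - n j • (Pi.single k 1 : Fin d → ℝ)) i * n i) = 0 := by
    have e : ∀ i, (n k • (Pi.single j 1 : Fin d → ℝ) - n j • (Pi.single k 1 : Fin d → ℝ)) i * n i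
        = n k * ((Pi.single j 1 : Fin d → ℝ) i * n i)
          - n j * ((Pi.single k 1 : Fin d → ℝ) i * n i) := by
      intro i
      simp only [Pi.sub_apply, Pi.smul_apply, smul_eq_mul]
      ring
    rw [Finset.sum_congr rfl (fun i _ => e i), Finset.sum_sub_distrib,
      ← Finset.mul_sum, ← Finset.mul_sum, hsingle, hsingle]
    ring
  have := hLv _ hv0
  rw [map_sub, map_smul, map_smul] at this
  have hJj : J j = L (Pi.single j 1) := by
    simp [hL, ContinuousLinearMap.sub_apply, hJ j]
  have hJk : J k = L (Pi.single k 1) := by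
    simp [hL, ContinuousLinearMap.sub_apply, hJ k]
  have : n k * L (Pi.single j 1) - n j * L (Pi.single k 1) = 0 := by
    simpa [smul_eq_mul] using this
  rw [hJj, hJk]
  linarith
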